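/- Let k₁,…,kₙ and l₁,…,lₙ be scalars with kᵢ ≠ kⱼ for i ≠ j and lⱼ ≠ kᵢ for all i,j. Let K(t) = ∏ₘ (t − kₘ). Then the Cauchy matrix (1/(lⱼ − kᵢ))₍ᵢⱼ₎ equals diag(K′(k₁),…,K′(kₙ)) · W(k)⁻¹ · W(l) · diag(K(l₁)⁻¹,…,K(lₙ)⁻¹), where W(k) is the Vandermonde matrix with (i,j) entry kⱼ^(i−1). -/

import Mathlib

open Matrix Polynomial

theorem cauchy_matrix_factorization {K : Type*} [Field K] {n : ℕ} (k l : Fin n → K)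
    (hk : Function.Injective k) (hkl : ∀ i j, l j ≠ k i) :
    (Matrix.of fun i j : Fin n => (l j - k i)⁻¹)
      = Matrix.diagonal (fun i => (Polynomial.derivative (∏ m, (X - C (k m)))).eval (k i))
        * (Matrix.vandermonde k)ᵀ⁻¹ * (Matrix.vandermonde l)ᵀ
        * Matrix.diagonal (fun j => ((∏ m, (X - C (k m))).eval (l j))⁻¹) := by
  classical
  set Kp : Polynomial K := ∏ m, (X - C (k m)) with hKp
  have hKnodal : Kp = Lagrange.nodal Finset.univ k := by
    rw [Lagrange.nodal_eq]
  have hInj : Set.InjOn k (Finset.univ : Finset (Fin n)) := fun a _ b _ h => hk h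
  have hd : ∀ i, (derivative Kp).eval (k i) ≠ 0 := by
    intro i
    rw [hKnodal, Lagrange.eval_nodal_derivative_eval_node_eq (Finset.mem_univ i),
      Lagrange.eval_nodal]
    rw [Finset.prod_ne_zero_iff]
    intro m hm
    rw [sub_ne_zero]
    exact fun h => (Finset.mem_erase.mp hm).1 (hk h.symm)
  have he : ∀ j, Kp.eval (l j) ≠ 0 := by
    intro j
    rw [hKp, Polynomial.eval_prod, Finset.prod_ne_zero_iff]
    intro m _
    simp only [eval_sub, eval_X, eval_C, sub_ne_zero]
    exact hkl m j
  have hnw : ∀ m, Lagrange.nodalWeight Finset.univ k m = ((derivative Kp).eval (k m))⁻¹ := by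
    intro m
    rw [Lagrange.nodalWeight_eq_eval_derivative_nodal (Finset.mem_univ m), hKnodal]
  have hsum : ∀ (p : ℕ), p < n → ∀ j,
      (l j) ^ p = Kp.eval (l j) *
        ∑ m, ((derivative Kp).eval (k m))⁻¹ * (l j - k m)⁻¹ * (k m) ^ p := by
    intro p hp j
    have hdeg : ((X : K[X]) ^ p).degree < (Finset.univ : Finset (Fin n)).card := by
      rw [degree_X_pow, Finset.card_univ, Fintype.card_fin]
      exact_mod_cast hp
    have hf : (X : K[X]) ^ p = Lagrange.interpolate Finset.univ k (fun m => (k m) ^ p) := by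
      apply Lagrange.eq_interpolate_of_eval_eq (r := fun m => (k m) ^ p) hInj hdeg
      intro i _
      simp
    have hx : ∀ m ∈ (Finset.univ : Finset (Fin n)), l j ≠ k m := fun m _ => hkl m j
    have := Lagrange.eval_interpolate_not_at_node (s := Finset.univ) (v := k)
      (fun m => (k m) ^ p) hx
    rw [← hf] at this
    simp only [eval_pow, eval_X] at this
    rw [this, ← hKnodal]
    congr 1
    exact Finset.sum_congr rfl fun m _ => by rw [hnw]
  have key : (Matrix.vandermonde k)ᵀ *
      (Matrix.of fun i j : Fin n =>
        ((derivative Kp).eval (k i))⁻¹ * ((l j - k i)⁻¹ * Kp.eval (l j)))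
      = (Matrix.vandermonde l)ᵀ := by
    ext i j
    simp only [Matrix.mul_apply, Matrix.transpose_apply, Matrix.vandermonde_apply,
      Matrix.of_apply]
    rw [hsum i i.isLt j, Finset.mul_sum]
    exact Finset.sum_congr rfl fun m _ => by ring
  have hvk : IsUnit (Matrix.vandermonde k)ᵀ.det := by
    rw [Matrix.det_transpose]
    exact isUnit_iff_ne_zero.mpr (Matrix.det_vandermonde_ne_zero_iff.mpr hk)
  have hM : (Matrix.of fun i j : Fin n =>
        ((derivative Kp).eval (k i))⁻¹ * ((l j - k i)⁻¹ * Kp.eval (l j)))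
      = (Matrix.vandermonde k)ᵀ⁻¹ * (Matrix.vandermonde l)ᵀ := by
    rw [← key, ← Matrix.mul_assoc, Matrix.nonsing_inv_mul _ hvk, Matrix.one_mul]
  rw [Matrix.mul_assoc (Matrix.diagonal _) _ _, ← hM]
  ext i j
  simp only [Matrix.mul_diagonal, Matrix.diagonal_mul, Matrix.of_apply]
  have h1 := hd i
  have h2 := he j
  have h3 : l j - k i ≠ 0 := sub_ne_zero.mpr (hkl i j)
  field_simp
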